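/- Let X be a centered Gaussian vector with positive definite covariance, fix j, and for S ⊆ [p] \ {j} let β_j(S) denote the L² projection coefficients of X_j onto {X_i : i ∈ S} and m_j(S) := supp(β_j(S)). If T_1, T_2 ⊆ [p] \ {j} satisfy β_j(T_1) = β_j(T_2) = β_j(S), then β_j(T_1 ∪ T_2) = β_j(S). (Invariant sets are closed under union.) -/

import Mathlib

open MeasureTheory ProbabilityTheory

/-- Invariant sets are closed under union: for a centered Gaussian vector with positive
definite covariance, if `β_j(T₁) = β_j(T₂) = β_j(S)` then `β_j(T₁ ∪ T₂) = β_j(S)`. -/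
theorem stmt8 {Ω : Type*} [MeasurableSpace Ω] (μ : Measure Ω) [IsProbabilityMeasure μ]
    (p : ℕ) (X : Fin p → Ω → ℝ)
    (hmeas : ∀ i, Measurable (X i))
    (hL2 : ∀ i, MemLp (X i) 2 μ)
    (hcentered : ∀ i, ∫ ω, X i ω ∂μ = 0)
    (hgauss : ∀ c : Fin p → ℝ,
      Measure.map (fun ω => ∑ i, c i * X i ω) μ =
        gaussianReal 0 (∑ i, ∑ k, c i * c k * ∫ ω, X i ω * X k ω ∂μ).toNNReal)
    (hposdef : (Matrix.of fun i k => ∫ ω, X i ω * X k ω ∂μ : Matrix (Fin p) (Fin p) ℝ).PosDef)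
    (j : Fin p) (S T₁ T₂ : Finset (Fin p)) (hjS : j ∉ S) (hjT₁ : j ∉ T₁) (hjT₂ : j ∉ T₂)
    (βS βT₁ βT₂ βU : Fin p → ℝ)
    (hβS_supp : ∀ i, i ∉ S → βS i = 0)
    (hβS_min : ∀ β : Fin p → ℝ, (∀ i, i ∉ S → β i = 0) →
      ∫ ω, (X j ω - ∑ i, βS i * X i ω) ^ 2 ∂μ ≤ ∫ ω, (X j ω - ∑ i, β i * X i ω) ^ 2 ∂μ)
    (hβT₁_supp : ∀ i, i ∉ T₁ → βT₁ i = 0)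
    (hβT₁_min : ∀ β : Fin p → ℝ, (∀ i, i ∉ T₁ → β i = 0) →
      ∫ ω, (X j ω - ∑ i, βT₁ i * X i ω) ^ 2 ∂μ ≤ ∫ ω, (X j ω - ∑ i, β i * X i ω) ^ 2 ∂μ)
    (hβT₂_supp : ∀ i, i ∉ T₂ → βT₂ i = 0)
    (hβT₂_min : ∀ β : Fin p → ℝ, (∀ i, i ∉ T₂ → β i = 0) →
      ∫ ω, (X j ω - ∑ i, βT₂ i * X i ω) ^ 2 ∂μ ≤ ∫ ω, (X j ω - ∑ i, β i * X i ω) ^ 2 ∂μ)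
    (hβU_supp : ∀ i, i ∉ T₁ ∪ T₂ → βU i = 0)
    (hβU_min : ∀ β : Fin p → ℝ, (∀ i, i ∉ T₁ ∪ T₂ → β i = 0) →
      ∫ ω, (X j ω - ∑ i, βU i * X i ω) ^ 2 ∂μ ≤ ∫ ω, (X j ω - ∑ i, β i * X i ω) ^ 2 ∂μ)
    (h₁ : βT₁ = βS) (h₂ : βT₂ = βS) :
    βU = βS := by
  classical
  rw [h₁] at hβT₁_supp hβT₁_min
  rw [h₂] at hβT₂_supp hβT₂_min
  -- covariance matrix entries
  set M : Fin p → Fin p → ℝ := fun i k => ∫ ω, X i ω * X k ω ∂μ with hMdef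
  -- integrability of products
  have hInt : ∀ i k, Integrable (fun ω => X i ω * X k ω) μ := by
    intro i k
    have h1 := ((hL2 i).add (hL2 k)).integrable_sq
    have heq : (fun ω => X i ω * X k ω)
        = fun ω => (2:ℝ)⁻¹ * (((X i ω + X k ω)^2 - X i ω ^2) - X k ω ^2) := by
      funext ω; ring
    rw [heq]
    exact ((h1.sub (hL2 i).integrable_sq).sub (hL2 k).integrable_sq).const_mul _
  -- key identity: second moment of a linear combination
  have key : ∀ c : Fin p → ℝ,
      ∫ ω, (∑ i, c i * X i ω) ^ 2 ∂μ = ∑ i, ∑ k, c i * c k * M i k := by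
    intro c
    have hpt : ∀ ω, (∑ i, c i * X i ω) ^ 2
        = ∑ i, ∑ k, c i * c k * (X i ω * X k ω) := by
      intro ω
      rw [sq, Finset.sum_mul_sum]
      exact Finset.sum_congr rfl fun i _ => Finset.sum_congr rfl fun k _ => by ring
    simp_rw [hpt]
    rw [integral_finset_sum _
      (fun i _ => integrable_finset_sum _ (fun k _ => ((hInt i k).const_mul _)))]
    refine Finset.sum_congr rfl fun i _ => ?_
    rw [integral_finset_sum _ (fun k _ => ((hInt i k).const_mul _))]
    exact Finset.sum_congr rfl fun k _ => integral_const_mul _ _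
  -- residual coefficients
  set γ : (Fin p → ℝ) → (Fin p → ℝ) :=
    fun β i => (if i = j then 1 else 0) - β i with hγdef
  have hre : ∀ (β : Fin p → ℝ) (ω : Ω),
      X j ω - ∑ i, β i * X i ω = ∑ i, γ β i * X i ω := by
    intro β ω
    simp only [hγdef, sub_mul, ite_mul, one_mul, zero_mul, Finset.sum_sub_distrib,
      Finset.sum_ite_eq', Finset.mem_univ, if_true]
  have hf : ∀ β : Fin p → ℝ,
      ∫ ω, (X j ω - ∑ i, β i * X i ω) ^ 2 ∂μ = ∑ i, ∑ k, γ β i * γ β k * M i k := by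
    intro β
    rw [← key]
    refine integral_congr_ae (Filter.Eventually.of_forall fun ω => ?_)
    dsimp only
    rw [hre β ω]
  -- quadratic form shorthand
  set Q : (Fin p → ℝ) → ℝ := fun c => ∑ i, ∑ k, c i * c k * M i k with hQdef
  have hQpos : ∀ d : Fin p → ℝ, d ≠ 0 → 0 < Q d := by
    intro d hd
    have h := hposdef.dotProduct_mulVec_pos hd
    simpa [hQdef, hMdef, dotProduct, Matrix.mulVec, Finset.mul_sum, mul_assoc,
      mul_comm, mul_left_comm] using h
  have hMsym : ∀ i k, M i k = M k i := by
    intro i k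
    exact integral_congr_ae (Filter.Eventually.of_forall fun ω => mul_comm _ _)
  -- expansion of Q at a perturbation
  have hQexp : ∀ c d : Fin p → ℝ,
      Q (fun k => c k - d k) = Q c - 2 * (∑ i, ∑ k, d i * c k * M i k) + Q d := by
    intro c d
    have hswap : ∑ i, ∑ k, c i * d k * M i k = ∑ i, ∑ k, d i * c k * M i k := by
      rw [Finset.sum_comm]
      exact Finset.sum_congr rfl fun i _ => Finset.sum_congr rfl fun k _ => by
        rw [hMsym k i]; ring
    simp only [hQdef]
    have : ∀ i k, (c i - d i) * (c k - d k) * M i k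
        = c i * c k * M i k - c i * d k * M i k - d i * c k * M i k + d i * d k * M i k := by
      intro i k; ring
    simp_rw [this, Finset.sum_add_distrib, Finset.sum_sub_distrib]
    rw [hswap]; ring
  -- orthogonality: residual of βS is orthogonal to X i for i ∈ T₁ ∪ T₂
  have horth : ∀ i ∈ T₁ ∪ T₂, (∑ k, γ βS k * M i k) = 0 := by
    have main : ∀ (T : Finset (Fin p)), (∀ k, k ∉ T → βS k = 0) →
        (∀ β : Fin p → ℝ, (∀ k, k ∉ T → β k = 0) →
          ∫ ω, (X j ω - ∑ i, βS i * X i ω) ^ 2 ∂μ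
            ≤ ∫ ω, (X j ω - ∑ i, β i * X i ω) ^ 2 ∂μ) →
        ∀ i ∈ T, (∑ k, γ βS k * M i k) = 0 := by
      intro T hsupp hmin i hi
      set e : Fin p → ℝ := fun k => if k = i then 1 else 0 with hedef
      have he0 : e ≠ 0 := by
        intro h
        have := congrFun h i
        simp [hedef] at this
      set L : ℝ := ∑ k, γ βS k * M i k with hLdef
      have heQ : Q e = M i i := by
        simp [hQdef, hedef, ite_mul, Finset.sum_ite_eq', Finset.mul_sum]
      have hA : 0 < M i i := heQ ▸ hQpos e he0
      have hkey : ∀ t : ℝ, 0 ≤ t ^ 2 * M i i - 2 * t * L := by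
        intro t
        have hsupp' : ∀ k, k ∉ T → βS k + t * e k = 0 := by
          intro k hk
          have hki : k ≠ i := fun h => hk (h ▸ hi)
          simp [hedef, hki, hsupp k hk]
        have h := hmin (fun k => βS k + t * e k) hsupp'
        rw [hf, hf] at h
        have hγeq : (γ fun k => βS k + t * e k) = fun k => γ βS k - t * e k := by
          funext k; simp [hγdef]; ring
        rw [hγeq] at h
        have hexp := hQexp (γ βS) (fun k => t * e k)
        have hcross : (∑ i', ∑ k, (t * e i') * γ βS k * M i' k) = t * L := by
          simp only [hedef, hLdef, ite_mul, one_mul, zero_mul, mul_assoc]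
          rw [Finset.mul_sum]
          rw [Finset.sum_eq_single i]
          · exact Finset.sum_congr rfl fun k _ => by simp [Finset.mul_sum]
          · intro b _ hb; simp [hb]
          · intro h; exact absurd (Finset.mem_univ i) h
        have hQte : Q (fun k => t * e k) = t ^ 2 * M i i := by
          simp only [hQdef]
          have : ∀ i' k, (t * e i') * (t * e k) * M i' k = t ^ 2 * (e i' * e k * M i' k) := by
            intro i' k; ring
          simp_rw [this, ← Finset.mul_sum]
          rw [show (∑ i', ∑ k, e i' * e k * M i' k) = Q e from rfl, heQ]
        rw [hexp, hcross, hQte] at hexp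
        have h' : (Q (γ βS) : ℝ) ≤ Q (γ βS) - 2 * (t * L) + t ^ 2 * M i i := by
          calc Q (γ βS) ≤ Q (fun k => γ βS k - t * e k) := h
          _ = Q (γ βS) - 2 * (t * L) + t ^ 2 * M i i := by
              rw [hQexp (γ βS) (fun k => t * e k), hcross, hQte]
        nlinarith [h']
      have h := hkey (L / M i i)
      have hid : (L / M i i) ^ 2 * M i i - 2 * (L / M i i) * L = -(L ^ 2) / M i i := by
        field_simp; ring
      rw [hid] at h
      have h' := mul_nonneg h hA.le
      rw [div_mul_cancel₀ _ hA.ne'] at h'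
      exact (pow_eq_zero_iff (two_ne_zero)).mp (le_antisymm (by linarith) (sq_nonneg L))
    intro i hi
    rcases Finset.mem_union.mp hi with h | h
    · exact main T₁ hβT₁_supp hβT₁_min i h
    · exact main T₂ hβT₂_supp hβT₂_min i h
  -- difference vector
  set d : Fin p → ℝ := fun k => βU k - βS k with hddef
  have hd_supp : ∀ k, k ∉ T₁ ∪ T₂ → d k = 0 := by
    intro k hk
    have h1 : k ∉ T₁ := fun h => hk (Finset.mem_union_left _ h)
    simp [hddef, hβU_supp k hk, hβT₁_supp k h1]
  have hcross0 : (∑ i, ∑ k, d i * γ βS k * M i k) = 0 := by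
    refine Finset.sum_eq_zero fun i _ => ?_
    by_cases hi : i ∈ T₁ ∪ T₂
    · calc (∑ k, d i * γ βS k * M i k) = d i * ∑ k, γ βS k * M i k := by
            rw [Finset.mul_sum]; exact Finset.sum_congr rfl fun k _ => by ring
      _ = 0 := by rw [horth i hi, mul_zero]
    · have : d i = 0 := hd_supp i hi
      simp [this]
  have hγU : γ βU = fun k => γ βS k - d k := by
    funext k; simp only [hγdef, hddef]; ring
  have hle : Q (γ βU) ≤ Q (γ βS) := by
    have h := hβU_min βS (fun k hk => hβT₁_supp k (fun h' => hk (Finset.mem_union_left _ h')))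
    rw [hf, hf] at h
    exact h
  have heq : Q (γ βU) = Q (γ βS) + Q d := by
    rw [hγU, hQexp (γ βS) d, hcross0]; ring
  have hQd : Q d ≤ 0 := by linarith [heq ▸ hle]
  have hd0 : d = 0 := by
    by_contra hne
    exact absurd hQd (not_le.mpr (hQpos d hne))
  funext k
  have := congrFun hd0 k
  simp only [hddef, Pi.zero_apply] at this
  linarith [this]
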